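/- Every weakly Radon–Nikodým compact Hausdorff space is quasi weakly Radon–Nikodým. -/

import Mathlib

open Set Function

/-- A sequence of pairs of subsets `(A n, B n)` of a set `S` is *independent* if for every
`n` and every choice function `ε`, the intersection over `k < n` of `A k` (if `ε k = 0/false`)
or `B k` (if `ε k = 1/true`) is nonempty. -/
def IsIndependentSeq {S : Type*} (A B : ℕ → Set S) : Prop :=
  ∀ (n : ℕ) (ε : Fin n → Bool),
    (⋂ k : Fin n, if ε k = true then B (k : ℕ) else A (k : ℕ)).Nonempty

/-- A real Banach space `X` *contains an isomorphic copy of `ℓ¹`* if there is a bounded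
linear map from `ℓ¹` into `X` which is an isomorphism onto its image, i.e. bounded below. -/
def ContainsL1 (X : Type*) [NormedAddCommGroup X] [NormedSpace ℝ X] : Prop :=
  ∃ T : lp (fun _ : ℕ => ℝ) 1 →L[ℝ] X, ∃ c : ℝ, 0 < c ∧ ∀ v, c * ‖v‖ ≤ ‖T v‖

/-- A compact (Hausdorff) space is *weakly Radon–Nikodým* if it is homeomorphic to a
weak*-compact subset of the dual of a real Banach space not containing a copy of `ℓ¹`. -/
def IsWRN (K : Type*) [TopologicalSpace K] : Prop :=
  ∃ (X : Type) (_ : NormedAddCommGroup X) (_ : NormedSpace ℝ X) (_ : CompleteSpace X)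
    (S : Set (WeakDual ℝ X)), ¬ ContainsL1 X ∧ IsCompact S ∧ Nonempty (K ≃ₜ S)

/-- A compact space `K` is *quasi weakly Radon–Nikodým* (QWRN) if there is a homeomorphic
embedding `i` of `K` into `[0,1]^Γ` for some set `Γ` such that for every `ε > 0` there is a
countable decomposition `Γ = ⋃ n, Γs n` such that for every `n` and all reals `p < q` with
`q - p > ε`, the family of pairs `({x | (i x α : ℝ) < p}, {x | (i x α : ℝ) > q})`, `α ∈ Γs n`,
contains no independent sequence. -/
def IsQWRN (K : Type*) [TopologicalSpace K] : Prop :=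
  ∃ (Γ : Type) (i : K → Γ → unitInterval), Topology.IsEmbedding i ∧
    ∀ ε : ℝ, ε > 0 → ∃ Γs : ℕ → Set Γ, (⋃ n, Γs n) = Set.univ ∧
      ∀ n : ℕ, ∀ p q : ℝ, q - p > ε →
        ¬ ∃ φ : ℕ → Γ, (∀ m, φ m ∈ Γs n) ∧
          IsIndependentSeq (fun m => {x : K | (i x (φ m) : ℝ) < p})
                           (fun m => {x : K | (i x (φ m) : ℝ) > q})

/-- Every WRN compact Hausdorff space is QWRN. -/
theorem isQWRN_of_isWRN
    (K : Type*) [TopologicalSpace K] [CompactSpace K] [T2Space K]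
    (h : IsWRN K) : IsQWRN K := by
  obtain ⟨X, _, _, _, S, hL1, hS, ⟨e⟩⟩ := h
  -- uniform bound on elements of S
  obtain ⟨B, hB1, hB⟩ : ∃ B : ℝ, 1 ≤ B ∧ ∀ s : S, ∀ α : X, |(s : WeakDual ℝ X) α| ≤ B * ‖α‖ := by
    obtain ⟨C, hC⟩ := banach_steinhaus
      (g := fun s : S => WeakDual.toStrongDual (s : WeakDual ℝ X))
      (fun α => by
        obtain ⟨C, hC⟩ := hS.exists_bound_of_continuousOn
          ((WeakDual.eval_continuous α).continuousOn (s := S))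
        exact ⟨C, fun s => hC s s.2⟩)
    refine ⟨max C 1, le_max_right _ _, fun s α => ?_⟩
    calc |(s : WeakDual ℝ X) α| ≤ ‖WeakDual.toStrongDual (s : WeakDual ℝ X)‖ * ‖α‖ := by
          simpa using (WeakDual.toStrongDual (s : WeakDual ℝ X)).le_opNorm α
    _ ≤ max C 1 * ‖α‖ :=
          mul_le_mul_of_nonneg_right (le_trans (hC s) (le_max_left _ _)) (norm_nonneg _)
  set c : X → ℝ := fun α => B * ‖α‖ + 1 with hc_def
  have hc1 : ∀ α, 1 ≤ c α := fun α => by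
    have : (0:ℝ) ≤ B * ‖α‖ := by positivity
    simp only [hc_def]; linarith
  have hc0 : ∀ α, 0 < c α := fun α => lt_of_lt_of_le one_pos (hc1 α)
  have hev : ∀ (x : K) (α : X), |(e x : WeakDual ℝ X) α| < c α := fun x α =>
    lt_of_le_of_lt (hB (e x) α) (by simp [hc_def])
  have hmem : ∀ (x : K) (α : X),
      ((e x : WeakDual ℝ X) α + c α) / (2 * c α) ∈ unitInterval := by
    intro x α
    have h1 := abs_lt.mp (hev x α)
    constructor
    · apply div_nonneg (by linarith [h1.1]) (by linarith [hc0 α])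
    · rw [div_le_one (by linarith [hc0 α])]; linarith [h1.2]
  set i : K → X → unitInterval := fun x α => ⟨_, hmem x α⟩ with hi_def
  have hival : ∀ (x : K) (α : X), (i x α : ℝ) = ((e x : WeakDual ℝ X) α + c α) / (2 * c α) :=
    fun x α => rfl
  refine ⟨X, i, ?_, ?_⟩
  · -- embedding
    have hcont : Continuous i := by
      refine continuous_pi fun α => Continuous.subtype_mk ?_ _
      have h1 : Continuous fun x : K => (e x : WeakDual ℝ X) α :=
        (WeakDual.eval_continuous α).comp (continuous_subtype_val.comp e.continuous)
      exact (h1.add continuous_const).div_const _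
    have hinj : Function.Injective i := by
      intro x y hxy
      have hcoord : ∀ α, (e x : WeakDual ℝ X) α = (e y : WeakDual ℝ X) α := by
        intro α
        have h2 : (i x α : ℝ) = (i y α : ℝ) := by rw [congrFun hxy α]
        rw [hival, hival] at h2
        have hne : (2 * c α : ℝ) ≠ 0 := by have := hc0 α; positivity
        field_simp at h2
        rw [div_left_inj' (ne_of_gt (hc0 α))] at h2
        linarith
      have : (e x : WeakDual ℝ X) = (e y : WeakDual ℝ X) := DFunLike.ext _ _ hcoord
      exact e.injective (Subtype.ext this)
    exact (hcont.isClosedEmbedding hinj).toIsEmbedding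
  · -- decomposition
    intro ε hε
    refine ⟨fun n => {α : X | ‖α‖ ≤ n}, ?_, ?_⟩
    · ext α; simp only [mem_iUnion, mem_setOf_eq, mem_univ, iff_true]
      exact exists_nat_ge ‖α‖
    · intro n p q hpq
      rintro ⟨φ, hφn, hind⟩
      apply hL1
      -- translate membership
      have hA : ∀ (x : K) (m : ℕ), (i x (φ m) : ℝ) < p →
          (e x : WeakDual ℝ X) (φ m) < c (φ m) * (2 * p - 1) := by
        intro x m hx
        have hcm := hc0 (φ m)
        rw [hival, div_lt_iff₀ (by linarith)] at hx
        nlinarith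
      have hQ : ∀ (x : K) (m : ℕ), (i x (φ m) : ℝ) > q →
          (e x : WeakDual ℝ X) (φ m) > c (φ m) * (2 * q - 1) := by
        intro x m hx
        have hcm := hc0 (φ m)
        rw [gt_iff_lt, hival, lt_div_iff₀ (by linarith)] at hx
        rw [gt_iff_lt]
        nlinarith
      -- key finite inequality
      have key : ∀ (N : ℕ) (a : ℕ → ℝ),
          ε * ∑ k ∈ Finset.range N, |a k| ≤ B * ‖∑ k ∈ Finset.range N, a k • φ k‖ := by
        intro N a
        obtain ⟨xp, hxp⟩ := hind N (fun k => decide (0 ≤ a (k : ℕ)))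
        obtain ⟨xm, hxm⟩ := hind N (fun k => !decide (0 ≤ a (k : ℕ)))
        simp only [mem_iInter] at hxp hxm
        have hterm : ∀ k : Fin N, 2 * ε * |a (k : ℕ)| ≤
            a (k : ℕ) * ((e xp : WeakDual ℝ X) (φ (k : ℕ)) - (e xm : WeakDual ℝ X) (φ (k : ℕ))) := by
          intro k
          have hp' := hxp k
          have hm' := hxm k
          have hgap : 2 * ε < c (φ (k : ℕ)) * (2 * q - 1) - c (φ (k : ℕ)) * (2 * p - 1) := by
            have h1 := hc1 (φ (k : ℕ))
            nlinarith
          by_cases hak : 0 ≤ a (k : ℕ)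
          · rw [if_pos (by simp [hak])] at hp'
            rw [if_neg (by simp [hak])] at hm'
            have h1 := hQ xp (k : ℕ) hp'
            have h2 := hA xm (k : ℕ) hm'
            rw [abs_of_nonneg hak]
            nlinarith
          · rw [if_neg (by simp [hak])] at hp'
            rw [if_pos (by simp [hak])] at hm'
            have h1 := hA xp (k : ℕ) hp'
            have h2 := hQ xm (k : ℕ) hm'
            push_neg at hak
            rw [abs_of_neg hak]
            nlinarith
        set v := ∑ k ∈ Finset.range N, a k • φ k with hv
        have hsum1 : ∑ k ∈ Finset.range N, a k *
            ((e xp : WeakDual ℝ X) (φ k) - (e xm : WeakDual ℝ X) (φ k)) =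
            (e xp : WeakDual ℝ X) v - (e xm : WeakDual ℝ X) v := by
          rw [hv, map_sum, map_sum, ← Finset.sum_sub_distrib]
          congr 1; ext k; simp only [map_smul, smul_eq_mul]; ring
        have hub : (e xp : WeakDual ℝ X) v - (e xm : WeakDual ℝ X) v ≤ 2 * (B * ‖v‖) := by
          have h1 := abs_le.mp (hB (e xp) v)
          have h2 := abs_le.mp (hB (e xm) v)
          linarith [h1.2, h2.1]
        have hlb : ∑ k ∈ Finset.range N, 2 * ε * |a k| ≤
            ∑ k ∈ Finset.range N, a k *
              ((e xp : WeakDual ℝ X) (φ k) - (e xm : WeakDual ℝ X) (φ k)) := by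
          apply Finset.sum_le_sum
          intro k hk
          exact hterm ⟨k, Finset.mem_range.mp hk⟩
        rw [← Finset.mul_sum] at hlb
        rw [hsum1] at hlb
        linarith
      -- summability facts
      have habs : ∀ a : lp (fun _ : ℕ => ℝ) 1, Summable fun m => |a m| := by
        intro a
        have := (lp.memℓp a).summable (by norm_num)
        simpa using this
      have hnorm : ∀ a : lp (fun _ : ℕ => ℝ) 1, ‖a‖ = ∑' m, |a m| := by
        intro a
        rw [lp.norm_eq_tsum_rpow (by norm_num)]
        simp [Real.rpow_one]
      have hsumn : ∀ a : lp (fun _ : ℕ => ℝ) 1, Summable fun m => ‖a m • φ m‖ := by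
        intro a
        apply Summable.of_nonneg_of_le (fun m => norm_nonneg _) (fun m => ?_)
          (((habs a).mul_right (n : ℝ)))
        rw [norm_smul]
        have := hφn m
        simp only [mem_setOf_eq] at this
        calc ‖a m‖ * ‖φ m‖ ≤ ‖a m‖ * n :=
              mul_le_mul_of_nonneg_left this (norm_nonneg _)
        _ = |a m| * n := by rw [Real.norm_eq_abs]
      have hsum : ∀ a : lp (fun _ : ℕ => ℝ) 1, Summable fun m => a m • φ m :=
        fun a => (hsumn a).of_norm
      -- the operator
      set T0 : lp (fun _ : ℕ => ℝ) 1 →ₗ[ℝ] X :=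
        { toFun := fun a => ∑' m, a m • φ m
          map_add' := fun a b => by
            simp only [lp.coeFn_add, Pi.add_apply, add_smul]
            exact Summable.tsum_add (hsum a) (hsum b)
          map_smul' := fun r a => by
            simp only [lp.coeFn_smul, Pi.smul_apply, smul_eq_mul, RingHom.id_apply, mul_smul]
            exact Summable.tsum_const_smul r (hsum a) } with hT0
      have hT0app : ∀ a, T0 a = ∑' m, a m • φ m := fun a => rfl
      have hTb : ∀ a : lp (fun _ : ℕ => ℝ) 1, ‖T0 a‖ ≤ (n : ℝ) * ‖a‖ := by
        intro a
        rw [hT0app, hnorm]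
        calc ‖∑' m, a m • φ m‖ ≤ ∑' m, ‖a m • φ m‖ :=
              norm_tsum_le_tsum_norm (hsumn a)
        _ ≤ ∑' m, |a m| * n := by
              apply Summable.tsum_le_tsum ?_ (hsumn a) ((habs a).mul_right _)
              intro m
              rw [norm_smul, Real.norm_eq_abs]
              exact mul_le_mul_of_nonneg_left (hφn m) (abs_nonneg _)
        _ = (n : ℝ) * ∑' m, |a m| := by rw [tsum_mul_right]; ring
      set T : lp (fun _ : ℕ => ℝ) 1 →L[ℝ] X := T0.mkContinuous (n : ℝ) hTb with hT
      have hTapp : ∀ a, T a = ∑' m, a m • φ m := fun a => rfl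
      refine ⟨T, ε / B, div_pos hε (by linarith), fun a => ?_⟩
      -- lower bound via limits of partial sums
      have h1 : Filter.Tendsto (fun N => ε * ∑ k ∈ Finset.range N, |a k|)
          Filter.atTop (nhds (ε * ‖a‖)) := by
        rw [hnorm]
        exact ((habs a).hasSum.tendsto_sum_nat).const_mul ε
      have h2 : Filter.Tendsto (fun N => B * ‖∑ k ∈ Finset.range N, a k • φ k‖)
          Filter.atTop (nhds (B * ‖T a‖)) := by
        rw [hTapp]
        exact (((hsum a).hasSum.tendsto_sum_nat).norm).const_mul B
      have h3 : ε * ‖a‖ ≤ B * ‖T a‖ :=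
        le_of_tendsto_of_tendsto' h1 h2 (fun N => key N a)
      rw [div_mul_eq_mul_div, div_le_iff₀ (by linarith : (0:ℝ) < B)]
      linarith [h3]
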